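/- Setting k = log n / (log log n − log log log n) makes the glue count k + n^{1/k} of the counter-based line construction O(log n / log log n): there exist a constant C > 0 and a threshold N such that for every natural number n ≥ N, writing L = log n (natural logarithm), LL = log L, LLL = log LL, and k = L / (LL − LLL) (a positive real for n ≥ N), one has k + (n : ℝ)^(1/k) ≤ C · L / LL. -/

import Mathlib

open Real

/-- Choosing `k = log n / (log log n − log log log n)` makes the glue count
`k + n^(1/k)` of the counter-based line construction `O(log n / log log n)`. -/
theorem glue_count_bound :
    ∃ C : ℝ, 0 < C ∧ ∃ N : ℕ, ∀ n : ℕ, N ≤ n →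
      let L := Real.log n
      let LL := Real.log L
      let LLL := Real.log LL
      let k := L / (LL - LLL)
      0 < L ∧ 0 < LL ∧ 0 < LLL ∧ 0 < LL - LLL ∧
        k + (n : ℝ) ^ (1 / k) ≤ C * L / LL := by
  refine ⟨3, by norm_num, 21, fun n hn => ?_⟩
  intro L LL LLL k
  have hn21 : (21:ℝ) ≤ (n:ℝ) := by exact_mod_cast hn
  have hnpos : (0:ℝ) < n := by linarith
  have he : Real.exp 1 < 2.7182818286 := Real.exp_one_lt_d9
  have hepos := Real.exp_pos 1
  have hexp3 : Real.exp 3 ≤ 21 := by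
    have h3 : Real.exp 3 = Real.exp 1 ^ 3 := by
      rw [← Real.exp_nat_mul]; norm_num
    have hp : Real.exp 1 ^ 3 < 2.7182818286 ^ 3 := pow_lt_pow_left₀ he hepos.le (by norm_num)
    rw [h3]; nlinarith
  have hL3 : (3:ℝ) ≤ L := by
    have : Real.log (Real.exp 3) ≤ Real.log n :=
      Real.log_le_log (Real.exp_pos 3) (by linarith)
    simpa [Real.log_exp] using this
  have hLpos : 0 < L := by linarith
  have hLL1 : 1 < LL := by
    have h1 : Real.log (Real.exp 1) ≤ Real.log L :=
      Real.log_le_log hepos (by nlinarith)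
    simp only [Real.log_exp] at h1
    show 1 < Real.log L
    rcases lt_or_eq_of_le h1 with h | h
    · exact h
    · exfalso
      have : L = Real.exp 1 := by
        have := Real.exp_log hLpos
        rw [← h] at this; linarith [this]
      nlinarith
  have hLLpos : 0 < LL := by linarith
  have hLLLpos : 0 < LLL := Real.log_pos hLL1
  -- log LL ≤ LL / 2 via log √LL ≤ √LL − 1
  have hs : Real.sqrt LL > 0 := Real.sqrt_pos.mpr hLLpos
  have hlogs : Real.log (Real.sqrt LL) ≤ Real.sqrt LL - 1 :=
    Real.log_le_sub_one_of_pos hs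
  have hlogsq : Real.log (Real.sqrt LL) = LL.log / 2 := Real.log_sqrt hLLpos.le
  have hsq : Real.sqrt LL ^ 2 = LL := Real.sq_sqrt hLLpos.le
  have hhalf : LLL ≤ LL / 2 := by
    have h1 : LLL / 2 ≤ Real.sqrt LL - 1 := by rw [← hlogsq]; exact hlogs
    nlinarith [sq_nonneg (Real.sqrt LL - 2)]
  have hdpos : 0 < LL - LLL := by linarith
  refine ⟨hLpos, hLLpos, hLLLpos, hdpos, ?_⟩
  have hkpos : 0 < k := div_pos hLpos hdpos
  -- n^(1/k) = L / LL
  have hrpow : (n:ℝ) ^ (1 / k) = L / LL := by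
    have h1k : 1 / k = (LL - LLL) / L := one_div_div L (LL - LLL) ▸ rfl
    rw [Real.rpow_def_of_pos hnpos, h1k]
    have : Real.log n * ((LL - LLL) / L) = LL - LLL := by
      show L * ((LL - LLL) / L) = LL - LLL
      field_simp
    rw [this, Real.exp_sub, Real.exp_log hLLpos]
    show Real.exp (Real.log L) / LL = L / LL
    rw [Real.exp_log hLpos]
  rw [hrpow]
  -- k ≤ 2 L / LL
  have hk2 : k ≤ 2 * L / LL := by
    show L / (LL - LLL) ≤ 2 * L / LL
    rw [div_le_div_iff₀ hdpos hLLpos]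
    nlinarith
  have : L / LL + 2 * L / LL = 3 * L / LL := by ring
  linarith
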